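/- Let 0 < τ₁ < ⋯ < τ_M ≤ 1 be distinct positive nodes, Q the M×M collocation matrix, and Q_{Δ,M} = diag(τ₁/M, …, τ_M/M). Then the matrix Q − Q_{Δ,M} is nilpotent with (Q − Q_{Δ,M})^M = 0. -/

import Mathlib

open Polynomial Matrix Finset

noncomputable def collMat {M : ℕ} (τ : Fin M → ℝ) : Matrix (Fin M) (Fin M) ℝ :=
  Matrix.of fun i j => ∫ s in (0:ℝ)..(τ i), (Lagrange.basis Finset.univ τ j).eval s

lemma collMat_mulVec_pow {M : ℕ} (τ : Fin M → ℝ) (hinj : Function.Injective τ)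
    (n : ℕ) (hn : n < M) :
    (collMat τ).mulVec (fun i => τ i ^ n) = fun i => τ i ^ (n + 1) / (n + 1) := by
  have hXn : (X : ℝ[X]) ^ n = Lagrange.interpolate Finset.univ τ (fun j => τ j ^ n) := by
    have hcard : (Finset.univ : Finset (Fin M)).card = M := by simp
    have := Lagrange.eq_interpolate (f := (X : ℝ[X]) ^ n) hinj.injOn
      (by rw [Polynomial.degree_X_pow, hcard]; exact_mod_cast hn)
    simpa using this
  funext i
  have hswap : ∀ s : ℝ, (∑ j, τ j ^ n * (Lagrange.basis Finset.univ τ j).eval s) = s ^ n := by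
    intro s
    have := congrArg (Polynomial.eval s) hXn
    simpa [Lagrange.interpolate_apply, Polynomial.eval_finset_sum] using this.symm
  have : (collMat τ).mulVec (fun i => τ i ^ n) i
      = ∫ s in (0:ℝ)..(τ i), ∑ j, τ j ^ n * (Lagrange.basis Finset.univ τ j).eval s := by
    rw [intervalIntegral.integral_finset_sum]
    · simp only [Matrix.mulVec, dotProduct, collMat, Matrix.of_apply]
      rw [Finset.sum_congr rfl]
      intro j _
      rw [mul_comm, ← intervalIntegral.integral_const_mul]
    · intro j _
      exact (continuous_const.mul (Polynomial.continuous _)).intervalIntegrable _ _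
  rw [this]
  simp only [hswap]
  rw [integral_pow]
  field_simp
  simp

theorem minSRNS_nilpotent (M : ℕ) (hM : 1 ≤ M) (τ : Fin M → ℝ) (hmono : StrictMono τ)
    (hpos : ∀ i, 0 < τ i) (h1 : ∀ i, τ i ≤ 1) :
    (collMat τ - Matrix.diagonal fun i => τ i / M) ^ M = 0 := by
  set A := collMat τ - Matrix.diagonal fun i => τ i / M with hA
  have hinj : Function.Injective τ := hmono.injective
  -- action of A on monomial vectors
  have step : ∀ n : ℕ, n < M →
      A.mulVec (fun i => τ i ^ n) =
        ((n + 1 : ℝ)⁻¹ - (M : ℝ)⁻¹) • (fun i => τ i ^ (n + 1)) := by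
    intro n hn
    funext i
    rw [hA, Matrix.sub_mulVec]
    simp only [Pi.sub_apply, collMat_mulVec_pow τ hinj n hn, Matrix.mulVec_diagonal,
      Pi.smul_apply, smul_eq_mul]
    ring
  -- A^k kills τ^n when n + k = M
  have kill : ∀ k n : ℕ, n + k = M → 1 ≤ k → A ^ k *ᵥ (fun i => τ i ^ n) = 0 := by
    intro k
    induction k with
    | zero => intro n _ h; omega
    | succ k ih =>
      intro n hn _
      have hn' : n < M := by omega
      rw [pow_succ, ← Matrix.mulVec_mulVec, step n hn', Matrix.mulVec_smul]
      rcases Nat.lt_or_ge (n + 1) M with h | h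
      · rw [ih (n + 1) (by omega) (by omega), smul_zero]
      · have hM' : ((n : ℝ) + 1) = (M : ℝ) := by exact_mod_cast (by omega : n + 1 = M)
        rw [hM', sub_self, zero_smul]
  -- A^M kills τ^n for all n < M
  have killM : ∀ n : ℕ, n < M → A ^ M *ᵥ (fun i => τ i ^ n) = 0 := by
    intro n hn
    have : A ^ M = A ^ n * A ^ (M - n) := by rw [← pow_add]; congr 1; omega
    rw [this, ← Matrix.mulVec_mulVec, kill (M - n) n (by omega) (by omega), Matrix.mulVec_zero]
  -- A^M kills every vector
  have killAll : ∀ v : Fin M → ℝ, A ^ M *ᵥ v = 0 := by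
    intro v
    set p := Lagrange.interpolate Finset.univ τ v with hp
    have hdeg : p.natDegree < M := by
      have hd := Lagrange.degree_interpolate_lt (s := Finset.univ) (r := v) hinj.injOn
      simp only [Finset.card_univ, Fintype.card_fin] at hd
      by_cases hp0 : p = 0
      · simpa [hp0] using (show 0 < M by omega)
      · exact_mod_cast (Polynomial.degree_eq_natDegree hp0 ▸ hd)
    have hv : v = fun i => ∑ n ∈ Finset.range M, p.coeff n * τ i ^ n := by
      funext i
      rw [← Lagrange.eval_interpolate_at_node v hinj.injOn (Finset.mem_univ i), ← hp]
      rw [Polynomial.eval_eq_sum_range' (lt_of_lt_of_le hdeg le_rfl)]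
    rw [hv]
    have : (fun i => ∑ n ∈ Finset.range M, p.coeff n * τ i ^ n)
        = ∑ n ∈ Finset.range M, p.coeff n • (fun i => τ i ^ n) := by
      funext i; simp
    rw [this]
    have hms := map_sum ((A ^ M).mulVecLin)
      (fun n => p.coeff n • fun i => τ i ^ n) (Finset.range M)
    simp only [Matrix.mulVecLin_apply] at hms
    rw [hms]
    refine Finset.sum_eq_zero fun n hn => ?_
    rw [Matrix.mulVec_smul, killM n (Finset.mem_range.mp hn), smul_zero]
  ext i j
  have := congrFun (killAll (Pi.single j 1)) i
  simpa [Matrix.mulVec_single] using this
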